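/- Let (u, X) be a solution of the point-force global minimization, and set β⁺ = Σ_{βᵢ>0} βᵢ and β⁻ = Σ_{βᵢ<0} βᵢ. If |β⁺| > |β⁻| then the positive cluster point X⁺ lies in the interior Ω, and if |β⁺| < |β⁻| then the negative cluster point X⁻ lies in the interior Ω. -/

import Mathlib

open Finset

theorem stmt16_aux
    (Ω : Set (EuclideanSpace ℝ (Fin 2)))
    (hΩopen : IsOpen Ω) (hΩne : Ω.Nonempty)
    {V : Type*} [NormedAddCommGroup V] [InnerProductSpace ℝ V]
    (ev : V →ₗ[ℝ] (EuclideanSpace ℝ (Fin 2) → ℝ))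
    (hbv : ∀ x ∈ frontier Ω, ∀ v : V, ev v x = 0)
    (hint : ∀ x ∈ Ω, ∃ v : V, ev v x ≠ 0)
    (a : V →ₗ[ℝ] V →ₗ[ℝ] ℝ)
    (γ : ℝ) (hγ : 0 < γ)
    (hcoer : ∀ v, γ * ‖v‖ ^ 2 ≤ a v v)
    {N : ℕ} (β : Fin N → ℝ) (hβ : ∀ i, β i ≠ 0)
    (u : V) (X : Fin N → EuclideanSpace ℝ (Fin 2))
    (hmin : ∀ (v : V) (Y : Fin N → EuclideanSpace ℝ (Fin 2)),
      (∀ i, Y i ∈ closure Ω) →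
        (1 / 2) * a u u - ∑ i, β i * ev u (X i) ≤
          (1 / 2) * a v v - ∑ i, β i * ev v (Y i))
    (Xp Xm : EuclideanSpace ℝ (Fin 2))
    (hXp : Xp ∈ closure Ω) (hXm : Xm ∈ closure Ω)
    (hcluster : ∀ i,
      (0 < β i → (X i = Xp ∨ (X i ∈ frontier Ω ∧ Xp ∈ frontier Ω))) ∧
      (β i < 0 → (X i = Xm ∨ (X i ∈ frontier Ω ∧ Xm ∈ frontier Ω))))
    (habs : |∑ i ∈ Finset.univ.filter (fun i => 0 < β i), β i| >
        |∑ i ∈ Finset.univ.filter (fun i => β i < 0), β i|) : Xp ∈ Ω := by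
  by_contra hXpΩ
  have hXpf : Xp ∈ frontier Ω := by
    rw [hΩopen.frontier_eq]; exact ⟨hXp, hXpΩ⟩
  set βp : ℝ := ∑ i ∈ Finset.univ.filter (fun i => 0 < β i), β i with hβpdef
  set βm : ℝ := ∑ i ∈ Finset.univ.filter (fun i => β i < 0), β i with hβmdef
  have hβp0 : 0 ≤ βp :=
    Finset.sum_nonneg fun i hi => le_of_lt (Finset.mem_filter.mp hi).2
  have hβm0 : βm ≤ 0 :=
    Finset.sum_nonpos fun i hi => le_of_lt (Finset.mem_filter.mp hi).2
  have habs' : βp > -βm := by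
    rwa [abs_of_nonneg hβp0, abs_of_nonpos hβm0] at habs
  -- complement of the positive filter is the negative filter
  have hfilt : (Finset.univ.filter (fun i => ¬ 0 < β i)) =
      (Finset.univ.filter (fun i => β i < 0)) := by
    apply Finset.filter_congr
    intro i _
    simp only [not_lt, eq_iff_iff]
    constructor
    · intro h; exact lt_of_le_of_ne h (hβ i)
    · intro h; exact le_of_lt h
  -- positive-force points evaluate to zero
  have hposzero : ∀ i, 0 < β i → ev u (X i) = 0 := by
    intro i hi
    rcases (hcluster i).1 hi with h | h
    · rw [h]; exact hbv Xp hXpf u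
    · exact hbv (X i) h.1 u
  have hann : 0 ≤ a u u := le_trans (by positivity) (hcoer u)
  set E : ℝ := (1 / 2) * a u u - ∑ i, β i * ev u (X i) with hEdef
  clear_value E
  rcases lt_or_ge E 0 with hE | hE
  · -- E < 0 : swap the clusters
    -- Xm cannot be on the frontier, else all evaluations vanish
    have hXmf : Xm ∉ frontier Ω := by
      intro hmem
      have : ∀ i, β i * ev u (X i) = 0 := by
        intro i
        rcases lt_or_gt_of_ne (hβ i) with hneg | hpos
        · rcases (hcluster i).2 hneg with h | h
          · rw [h, hbv Xm hmem u, mul_zero]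
          · rw [hbv (X i) h.1 u, mul_zero]
        · rw [hposzero i hpos, mul_zero]
      have : E = (1/2) * a u u := by
        rw [hEdef, Finset.sum_congr rfl (fun i _ => this i), Finset.sum_const,
          smul_zero, sub_zero]
      rw [this] at hE
      linarith
    have hneg_eq : ∀ i, β i < 0 → X i = Xm := by
      intro i hi
      rcases (hcluster i).2 hi with h | h
      · exact h
      · exact absurd h.2 hXmf
    set m : ℝ := ev u Xm with hmdef
    clear_value m
    have hsum : ∑ i, β i * ev u (X i) = βm * m := by
      rw [← Finset.sum_filter_add_sum_filter_not Finset.univ (fun i => 0 < β i)]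
      rw [hfilt]
      have h1 : ∑ i ∈ Finset.univ.filter (fun i => 0 < β i), β i * ev u (X i) = 0 :=
        Finset.sum_eq_zero fun i hi => by
          rw [hposzero i (Finset.mem_filter.mp hi).2, mul_zero]
      have h2 : ∑ i ∈ Finset.univ.filter (fun i => β i < 0), β i * ev u (X i)
          = βm * m := by
        rw [hβmdef, Finset.sum_mul]
        exact Finset.sum_congr rfl fun i hi => by
          rw [hneg_eq i (Finset.mem_filter.mp hi).2, ← hmdef]
      rw [h1, h2, zero_add]
    have hEeq : E = (1/2) * a u u - βm * m := by rw [hEdef, hsum]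
    have hβmne : βm ≠ 0 := by
      intro h
      rw [h, zero_mul, sub_zero] at hEeq
      rw [hEeq] at hE
      linarith
    set c : ℝ := βp / βm with hcdef
    clear_value c
    set v : V := c • u with hvdef
    clear_value v
    set Y : Fin N → EuclideanSpace ℝ (Fin 2) :=
      fun i => if 0 < β i then Xm else Xp with hYdef
    have hYmem : ∀ i, Y i ∈ closure Ω := by
      intro i; rw [hYdef]
      by_cases h : 0 < β i
      · simp [h, hXm]
      · simp [h, hXp]
    have havv : a v v = c * c * a u u := by
      rw [hvdef]; simp [map_smul, smul_eq_mul]; ring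
    have hsum2 : ∑ i, β i * ev v (Y i) = βp * (c * m) := by
      rw [← Finset.sum_filter_add_sum_filter_not Finset.univ (fun i => 0 < β i)]
      have h1 : ∑ i ∈ Finset.univ.filter (fun i => 0 < β i), β i * ev v (Y i)
          = βp * (c * m) := by
        rw [hβpdef, Finset.sum_mul]
        refine Finset.sum_congr rfl fun i hi => ?_
        have hpos := (Finset.mem_filter.mp hi).2
        have : Y i = Xm := by rw [hYdef]; simp [hpos]
        rw [this, hvdef]
        simp [map_smul, smul_eq_mul, hmdef]
      have h2 : ∑ i ∈ Finset.univ.filter (fun i => ¬ 0 < β i), β i * ev v (Y i)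
          = 0 := by
        refine Finset.sum_eq_zero fun i hi => ?_
        have hnp := (Finset.mem_filter.mp hi).2
        have : Y i = Xp := by rw [hYdef]; simp [hnp]
        rw [this, hvdef]
        simp [map_smul, smul_eq_mul, hbv Xp hXpf u]
      rw [h1, h2, add_zero]
    have hcompet := hmin v Y hYmem
    rw [hsum2, havv] at hcompet
    -- the competitor energy equals c^2 * E
    have hval : (1/2) * (c * c * a u u) - βp * (c * m) = c^2 * E := by
      rw [hEeq, hcdef]
      field_simp
    rw [hval] at hcompet
    have hc2 : 1 < c^2 := by
      rw [hcdef, div_pow, lt_div_iff₀ (by positivity)]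
      have h1 : βm^2 = |βm|^2 := (sq_abs βm).symm
      have h2 : βp^2 = |βp|^2 := (sq_abs βp).symm
      rw [one_mul, h1, h2]
      have : |βm| < |βp| := habs
      nlinarith [abs_nonneg βm]
    nlinarith
  · -- E ≥ 0 : a strictly negative competitor exists since βp + βm > 0
    obtain ⟨x₀, hx₀⟩ := hΩne
    obtain ⟨w, hw⟩ := hint x₀ hx₀
    set s : ℝ := ev w x₀ with hsdef
    clear_value s
    have hwne : w ≠ 0 := by
      intro h; apply hw; rw [hsdef, h]; simp
    have hB : 0 < a w w := by
      refine lt_of_lt_of_le ?_ (hcoer w)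
      have : 0 < ‖w‖ := norm_pos_iff.mpr hwne
      positivity
    set B : ℝ := a w w with hBdef
    clear_value B
    set S : ℝ := ∑ i, β i with hSdef
    clear_value S
    have hSpos : 0 < S := by
      rw [hSdef, ← Finset.sum_filter_add_sum_filter_not Finset.univ (fun i => 0 < β i),
        hfilt]
      linarith
    set t : ℝ := S * s / B with htdef
    clear_value t
    set v : V := t • w with hvdef
    clear_value v
    have hYmem : ∀ _ : Fin N, x₀ ∈ closure Ω := fun _ => subset_closure hx₀
    have hcompet := hmin v (fun _ => x₀) hYmem
    have havv : a v v = t * t * B := by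
      rw [hvdef, hBdef]; simp [map_smul, smul_eq_mul]; ring
    have hevv : ∀ i : Fin N, ev v x₀ = t * s := by
      intro i; rw [hvdef, hsdef]; simp [map_smul, smul_eq_mul]
    have hsum2 : ∑ i, β i * ev v x₀ = S * (t * s) := by
      rw [hSdef, Finset.sum_mul]
      exact Finset.sum_congr rfl fun i _ => by rw [hevv i]
    rw [hsum2, havv] at hcompet
    have hsne : s ≠ 0 := hw
    have hSs : S * s ≠ 0 := mul_ne_zero (ne_of_gt hSpos) hsne
    have hpos : 0 < (S * s) * t := by
      rw [htdef]
      have h : (S * s) * (S * s / B) = (S * s)^2 / B := by ring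
      rw [h]
      positivity
    have htB : t * B = S * s := by
      rw [htdef]; exact div_mul_cancel₀ (S * s) (ne_of_gt hB)
    have hval : (1/2) * (t * t * B) - S * (t * s) = -(1/2) * ((S * s) * t) := by
      have h : t * t * B = t * (t * B) := by ring
      rw [h, htB]; ring
    rw [hval] at hcompet
    linarith
/-- location of the cluster points.  Let `(u,X)` be a global minimizer
of the point force energy and `X⁺, X⁻` cluster points of the positive- and
negative-sign forces (as produced by the clustering theorem).  With
`β⁺ = Σ_{βᵢ>0} βᵢ` and `β⁻ = Σ_{βᵢ<0} βᵢ`: if `|β⁺| > |β⁻|` then `X⁺` lies in the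
interior `Ω`, and if `|β⁺| < |β⁻|` then `X⁻ ∈ Ω`.  The space `V` is modelled
abstractly via the evaluation map `ev` as in the clustering setting. -/
theorem stmt16
    (Ω : Set (EuclideanSpace ℝ (Fin 2)))
    (hΩopen : IsOpen Ω) (hΩbdd : Bornology.IsBounded Ω)
    (hΩconv : Convex ℝ Ω) (hΩne : Ω.Nonempty)
    {V : Type*} [NormedAddCommGroup V] [InnerProductSpace ℝ V] [CompleteSpace V]
    (ev : V →ₗ[ℝ] (EuclideanSpace ℝ (Fin 2) → ℝ))
    (hev_cont : ∀ v : V, ContinuousOn (ev v) (closure Ω))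
    (hev_bdd : ∃ C : ℝ, ∀ (v : V), ∀ x ∈ closure Ω, |ev v x| ≤ C * ‖v‖)
    (hbv : ∀ x ∈ frontier Ω, ∀ v : V, ev v x = 0)
    (hint : ∀ x ∈ Ω, ∃ v : V, ev v x ≠ 0)
    (hsep : ∀ x ∈ Ω, ∀ y ∈ closure Ω, x ≠ y → ∃ v : V, ev v x ≠ ev v y)
    (a : V →ₗ[ℝ] V →ₗ[ℝ] ℝ) (hsymm : ∀ v w, a v w = a w v)
    (γ Γ : ℝ) (hγ : 0 < γ) (hΓ : 0 < Γ)
    (hcoer : ∀ v, γ * ‖v‖ ^ 2 ≤ a v v)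
    (hbound : ∀ v w, a v w ≤ Γ * ‖v‖ * ‖w‖)
    {N : ℕ} (hN : 0 < N) (β : Fin N → ℝ) (hβ : ∀ i, β i ≠ 0)
    (u : V) (X : Fin N → EuclideanSpace ℝ (Fin 2))
    (hX : ∀ i, X i ∈ closure Ω)
    (hmin : ∀ (v : V) (Y : Fin N → EuclideanSpace ℝ (Fin 2)),
      (∀ i, Y i ∈ closure Ω) →
        (1 / 2) * a u u - ∑ i, β i * ev u (X i) ≤
          (1 / 2) * a v v - ∑ i, β i * ev v (Y i))
    (Xp Xm : EuclideanSpace ℝ (Fin 2))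
    (hXp : Xp ∈ closure Ω) (hXm : Xm ∈ closure Ω)
    (hcluster : ∀ i,
      (0 < β i → (X i = Xp ∨ (X i ∈ frontier Ω ∧ Xp ∈ frontier Ω))) ∧
      (β i < 0 → (X i = Xm ∨ (X i ∈ frontier Ω ∧ Xm ∈ frontier Ω)))) :
    (|∑ i ∈ Finset.univ.filter (fun i => 0 < β i), β i| >
        |∑ i ∈ Finset.univ.filter (fun i => β i < 0), β i| → Xp ∈ Ω) ∧
    (|∑ i ∈ Finset.univ.filter (fun i => 0 < β i), β i| <
        |∑ i ∈ Finset.univ.filter (fun i => β i < 0), β i| → Xm ∈ Ω) := by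
  constructor
  · intro h
    exact stmt16_aux Ω hΩopen hΩne ev hbv hint a γ hγ hcoer β hβ u X hmin
      Xp Xm hXp hXm hcluster h
  · intro h
    have hfilt1 : (Finset.univ.filter (fun i : Fin N => 0 < -β i)) =
        (Finset.univ.filter (fun i => β i < 0)) := by
      apply Finset.filter_congr
      intro i _
      simp [neg_pos]
    have hfilt2 : (Finset.univ.filter (fun i : Fin N => -β i < 0)) =
        (Finset.univ.filter (fun i => 0 < β i)) := by
      apply Finset.filter_congr
      intro i _
      simp [neg_lt_zero]
    refine stmt16_aux Ω hΩopen hΩne ev hbv hint a γ hγ hcoer (fun i => -β i)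
      (fun i => neg_ne_zero.mpr (hβ i)) (-u) X ?_ Xm Xp hXm hXp ?_ ?_
    · intro v Y hY
      have h2 := hmin (-v) Y hY
      have e1 : a (-u) (-u) = a u u := by simp
      have e2 : a (-v) (-v) = a v v := by simp
      have e3 : ∀ x, ev (-u) x = -(ev u x) := by intro x; simp
      have e4 : ∀ x, ev (-v) x = -(ev v x) := by intro x; simp
      calc (1 / 2 : ℝ) * a (-u) (-u) - ∑ i, (fun i => -β i) i * ev (-u) (X i)
          = (1 / 2) * a u u - ∑ i, β i * ev u (X i) := by
            rw [e1]
            congr 1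
            exact Finset.sum_congr rfl fun i _ => by rw [e3]; ring
        _ ≤ (1 / 2) * a (-v) (-v) - ∑ i, β i * ev (-v) (Y i) := h2
        _ = (1 / 2) * a v v - ∑ i, (fun i => -β i) i * ev v (Y i) := by
            rw [e2]
            congr 1
            exact Finset.sum_congr rfl fun i _ => by rw [e4]; ring
    · intro i
      exact ⟨fun hi => (hcluster i).2 (neg_pos.mp hi),
        fun hi => (hcluster i).1 (neg_lt_zero.mp hi)⟩
    · show |∑ i ∈ Finset.univ.filter (fun i => 0 < -β i), -β i| >
        |∑ i ∈ Finset.univ.filter (fun i => -β i < 0), -β i|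
      rw [hfilt1, hfilt2, Finset.sum_neg_distrib, Finset.sum_neg_distrib,
        abs_neg, abs_neg]
      exact h
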